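/- The function P(K) = ∫₀¹ (Σ_{j=1}^{M(s;K)} U_j(s)) φ(s) ds is an exact potential for the game: for every firm i, every pair of feasible strategies K_i and K'_i, and every fixed profile K_{-i} of the other firms' strategies, u_i(K_i, K_{-i}) − u_i(K'_i, K_{-i}) = P(K_i, K_{-i}) − P(K'_i, K_{-i}). -/

import Mathlib

open MeasureTheory Set Filter Topology

noncomputable section

/-- The measure of a set `A` under the score density `φ`. -/
def dMeas (φ : ℝ → ℝ) (A : Set ℝ) : ℝ := ∫ s in A, φ s

/-- `K` is a finite union of closed intervals. -/
def FinUnionIntervals (K : Set ℝ) : Prop :=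
  ∃ (n : ℕ) (a b : Fin n → ℝ), K = ⋃ i, Set.Icc (a i) (b i)

/-- A feasible strategy: a finite union of closed intervals inside `[0,1]`
with `φ`-measure at most the capacity `c`. -/
def Feasible (φ : ℝ → ℝ) (c : ℝ) (K : Set ℝ) : Prop :=
  K ⊆ Set.Icc (0:ℝ) 1 ∧ FinUnionIntervals K ∧ dMeas φ K ≤ c

/-- `M(s;K)`: the number of firms interviewing an applicant with score `s`. -/
def numFirms {N : ℕ} (K : Fin N → Set ℝ) (s : ℝ) : ℕ :=
  Nat.card {i : Fin N // s ∈ K i}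

/-- `Mmax(K)`: the maximal congestion over scores in `[0,1]`. -/
def maxFirms {N : ℕ} (K : Fin N → Set ℝ) : ℕ :=
  sSup ((fun s => numFirms K s) '' Set.Icc (0:ℝ) 1)

/-- Firm `i`'s expected utility under the profile `K`. -/
def utility (φ : ℝ → ℝ) (U : ℕ → ℝ → ℝ) {N : ℕ} (K : Fin N → Set ℝ) (i : Fin N) : ℝ :=
  ∫ s in K i, U (numFirms K s) s * φ s

/-- Social welfare: the total utility of all firms. -/
def SW (φ : ℝ → ℝ) (U : ℕ → ℝ → ℝ) {N : ℕ} (K : Fin N → Set ℝ) : ℝ :=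
  ∑ i, utility φ U K i

/-- Nash equilibrium: every strategy is feasible and no firm can strictly
increase its utility by a unilateral feasible deviation. -/
def NashEq (φ : ℝ → ℝ) (c : ℝ) (U : ℕ → ℝ → ℝ) {N : ℕ} (K : Fin N → Set ℝ) : Prop :=
  (∀ i, Feasible φ c (K i)) ∧
  ∀ (i : Fin N) (K' : Set ℝ), Feasible φ c K' →
    utility φ U (Function.update K i K') i ≤ utility φ U K i

/-- Correlated decision rule: `U_n(s) = s / n`. -/
def Ucorr : ℕ → ℝ → ℝ := fun n s => s / n

/-- Independent decision rule: `U_n(s) = (1 - (1-s)^n) / n`. -/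
def Uindep : ℕ → ℝ → ℝ := fun n s => (1 - (1 - s) ^ n) / n

/-- The potential function `P(K) = ∫₀¹ (Σ_{j=1}^{M(s;K)} U_j(s)) φ(s) ds`. -/
def potential (φ : ℝ → ℝ) (U : ℕ → ℝ → ℝ) {N : ℕ} (K : Fin N → Set ℝ) : ℝ :=
  ∫ s in Set.Icc (0:ℝ) 1, (∑ j ∈ Finset.Icc 1 (numFirms K s), U j s) * φ s

lemma finUnion_measurableSet {A : Set ℝ} (h : FinUnionIntervals A) : MeasurableSet A := by
  obtain ⟨n, a, b, rfl⟩ := h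
  exact MeasurableSet.iUnion fun i => measurableSet_Icc

lemma numFirms_eq_sum {N : ℕ} (K : Fin N → Set ℝ) (s : ℝ) :
    numFirms K s = ∑ j : Fin N, (K j).indicator (fun _ => 1) s := by
  classical
  rw [numFirms, Nat.card_eq_fintype_card, Fintype.card_subtype, Finset.card_filter]
  exact Finset.sum_congr rfl fun j _ => by simp [Set.indicator_apply]

/-- **Theorem (exact potential).**
`P` is an exact potential for the hiring game: for every firm `i`, every pair of
feasible strategies `Ki`, `Ki'`, and every fixed feasible profile of the other
firms' strategies, the change in firm `i`'s utility equals the change in `P`. -/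
theorem exact_potential
    {N : ℕ} (hN : 2 ≤ N) (φ : ℝ → ℝ)
    (hφm : Measurable φ) (hφpos : ∀ s ∈ Set.Icc (0:ℝ) 1, 0 < φ s)
    (hφint : ∫ s in Set.Icc (0:ℝ) 1, φ s = 1)
    (c : ℝ) (hc : 0 < c) (hc1 : c ≤ 1)
    (U : ℕ → ℝ → ℝ)
    (hU0 : ∀ n, 1 ≤ n → U n 0 = 0)
    (hUcont : ∀ n, 1 ≤ n → ContinuousOn (U n) (Set.Icc 0 1))
    (hUmono : ∀ n, 1 ≤ n → StrictMonoOn (U n) (Set.Icc 0 1))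
    (hUdec : ∀ n m, 1 ≤ n → n < m → ∀ s : ℝ, 0 < s → s ≤ 1 → U m s < U n s)
    (K : Fin N → Set ℝ) (hK : ∀ j, Feasible φ c (K j))
    (i : Fin N) (Ki Ki' : Set ℝ) (hKi : Feasible φ c Ki) (hKi' : Feasible φ c Ki') :
    utility φ U (Function.update K i Ki) i - utility φ U (Function.update K i Ki') i =
      potential φ U (Function.update K i Ki) - potential φ U (Function.update K i Ki') := by
  classical
  have measK : ∀ j, MeasurableSet (K j) := fun j => finUnion_measurableSet (hK j).2.1
  have measKi : MeasurableSet Ki := finUnion_measurableSet hKi.2.1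
  have measKi' : MeasurableSet Ki' := finUnion_measurableSet hKi'.2.1
  set m : ℝ → ℕ := fun s => ∑ j ∈ Finset.univ.erase i, (K j).indicator (fun _ => 1) s
    with hmdef
  have hmmeas : Measurable m :=
    Finset.measurable_sum _ fun j _ => Measurable.indicator measurable_const (measK j)
  have hmlt : ∀ s, m s < N := by
    intro s
    have h1 : m s ≤ ∑ _j ∈ Finset.univ.erase i, 1 := by
      apply Finset.sum_le_sum
      intro j _
      rw [Set.indicator_apply]
      split <;> omega
    rw [Finset.sum_const, smul_eq_mul, mul_one, Finset.card_erase_of_mem (Finset.mem_univ i),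
      Finset.card_univ, Fintype.card_fin] at h1
    omega
  -- counting lemma for an updated profile
  have hupd : ∀ (A : Set ℝ) (s : ℝ),
      numFirms (Function.update K i A) s = m s + A.indicator (fun _ => 1) s := by
    intro A s
    rw [numFirms_eq_sum, ← Finset.add_sum_erase _ _ (Finset.mem_univ i), add_comm]
    congr 1
    · exact Finset.sum_congr rfl fun j hj => by
        rw [Function.update_of_ne (Finset.ne_of_mem_erase hj)]
    · rw [Function.update_self]
  -- bounds for U
  have hBex : ∀ n : ℕ, ∃ C : ℝ, ∀ s ∈ Set.Icc (0:ℝ) 1, ‖U (n+1) s‖ ≤ C := fun n =>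
    isCompact_Icc.exists_bound_of_continuousOn (hUcont (n+1) (Nat.le_add_left 1 n))
  choose B hB using hBex
  set C : ℝ := ∑ j ∈ Finset.Icc 1 N, max (B (j-1)) 0 with hCdef
  -- φ is integrable
  have Iφ : IntegrableOn φ (Set.Icc (0:ℝ) 1) := by
    by_contra h
    rw [MeasureTheory.integral_undef h] at hφint
    norm_num at hφint
  set F : ℝ → ℝ := fun s => U (m s + 1) s * φ s with hFdef
  set G0 : ℝ → ℝ := fun s => (∑ j ∈ Finset.Icc 1 (m s), U j s) * φ s with hG0def
  -- a.e. strong measurability of the m-dependent factors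
  have hms : ∀ n, MeasurableSet {x | m x = n} := fun n => hmmeas (measurableSet_singleton n)
  have hFm : AEStronglyMeasurable (fun s => U (m s + 1) s)
      (volume.restrict (Set.Icc (0:ℝ) 1)) := by
    have key : ∀ s, U (m s + 1) s
        = ∑ n ∈ Finset.range N, Set.indicator {x | m x = n} (fun x => U (n+1) x) s := by
      intro s
      simp only [Set.indicator_apply, Set.mem_setOf_eq]
      rw [Finset.sum_ite_eq]
      exact (if_pos (Finset.mem_range.2 (hmlt s))).symm
    have := Finset.aestronglyMeasurable_sum (μ := volume.restrict (Set.Icc (0:ℝ) 1))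
      (Finset.range N) (fun n _ =>
        AEStronglyMeasurable.indicator
          ((hUcont (n+1) (Nat.le_add_left 1 n)).aestronglyMeasurable measurableSet_Icc)
          (hms n))
    exact this.congr (Filter.Eventually.of_forall fun s => (Finset.sum_apply s _ _).trans (key s).symm)
  have hG0m : AEStronglyMeasurable (fun s => ∑ j ∈ Finset.Icc 1 (m s), U j s)
      (volume.restrict (Set.Icc (0:ℝ) 1)) := by
    have key : ∀ s, (∑ j ∈ Finset.Icc 1 (m s), U j s)
        = ∑ n ∈ Finset.range N,
            Set.indicator {x | m x = n} (fun x => ∑ j ∈ Finset.Icc 1 n, U j x) s := by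
      intro s
      simp only [Set.indicator_apply, Set.mem_setOf_eq]
      rw [Finset.sum_ite_eq]
      exact (if_pos (Finset.mem_range.2 (hmlt s))).symm
    have := Finset.aestronglyMeasurable_sum (μ := volume.restrict (Set.Icc (0:ℝ) 1))
      (Finset.range N) (fun n _ =>
        AEStronglyMeasurable.indicator
          ((continuousOn_finset_sum (Finset.Icc 1 n)
            (fun j hj => hUcont j (Finset.mem_Icc.1 hj).1)).aestronglyMeasurable
            measurableSet_Icc)
          (hms n))
    exact this.congr (Filter.Eventually.of_forall fun s => (Finset.sum_apply s _ _).trans (key s).symm)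
  -- bounds
  have hFbd : ∀ s ∈ Set.Icc (0:ℝ) 1, ‖U (m s + 1) s‖ ≤ C := by
    intro s hs
    have hmem : m s + 1 ∈ Finset.Icc 1 N := Finset.mem_Icc.2 ⟨Nat.le_add_left 1 _, hmlt s⟩
    have h2 := Finset.single_le_sum (f := fun j => max (B (j-1)) 0)
      (fun j _ => le_max_right _ _) hmem
    simp only [Nat.add_sub_cancel] at h2
    exact le_trans (le_trans (hB (m s) s hs) (le_max_left _ _)) h2
  have hGbd : ∀ (k : ℕ), k ≤ N → ∀ s ∈ Set.Icc (0:ℝ) 1,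
      ‖∑ j ∈ Finset.Icc 1 k, U j s‖ ≤ C := by
    intro k hk s hs
    calc ‖∑ j ∈ Finset.Icc 1 k, U j s‖ ≤ ∑ j ∈ Finset.Icc 1 k, ‖U j s‖ := norm_sum_le _ _
      _ ≤ ∑ j ∈ Finset.Icc 1 k, max (B (j-1)) 0 := by
          apply Finset.sum_le_sum
          intro j hj
          have hj1 := (Finset.mem_Icc.1 hj).1
          have hje : ‖U j s‖ = ‖U ((j-1)+1) s‖ := by rw [Nat.sub_add_cancel hj1]
          rw [hje]
          exact le_trans (hB (j-1) s hs) (le_max_left _ _)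
      _ ≤ C := Finset.sum_le_sum_of_subset_of_nonneg
          (Finset.Icc_subset_Icc_right hk) (fun j _ _ => le_max_right _ _)
  -- integrability
  have IF : IntegrableOn F (Set.Icc (0:ℝ) 1) := by
    apply Iφ.bdd_mul hFm
    exact (ae_restrict_iff' measurableSet_Icc).2 (Filter.Eventually.of_forall hFbd)
  have IG0 : IntegrableOn G0 (Set.Icc (0:ℝ) 1) := by
    apply Iφ.bdd_mul hG0m
    exact (ae_restrict_iff' measurableSet_Icc).2
      (Filter.Eventually.of_forall fun s hs => hGbd (m s) (le_of_lt (hmlt s)) s hs)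
  -- pointwise decomposition of the potential integrand
  have hsplit : ∀ (A : Set ℝ) (s : ℝ),
      (∑ j ∈ Finset.Icc 1 (numFirms (Function.update K i A) s), U j s) * φ s
        = G0 s + Set.indicator A F s := by
    intro A s
    rw [hupd A s]
    by_cases hA : s ∈ A
    · rw [Set.indicator_of_mem hA, Set.indicator_of_mem hA,
        Finset.sum_Icc_succ_top (Nat.le_add_left 1 (m s))]
      simp only [hG0def, hFdef]
      ring
    · rw [Set.indicator_of_notMem hA, Set.indicator_of_notMem hA, add_zero, add_zero]
  -- the utility of firm i in updated profiles
  have hut : ∀ (A : Set ℝ), MeasurableSet A → A ⊆ Set.Icc (0:ℝ) 1 →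
      utility φ U (Function.update K i A) i
        = ∫ s in Set.Icc (0:ℝ) 1, Set.indicator A F s := by
    intro A hAm hAs
    rw [utility, Function.update_self, setIntegral_indicator hAm,
      Set.inter_eq_self_of_subset_right hAs]
    apply setIntegral_congr_fun hAm
    intro s hs
    simp only [hFdef]
    rw [hupd, Set.indicator_of_mem hs]
  -- the potential of updated profiles
  have hpot : ∀ (A : Set ℝ), MeasurableSet A →
      potential φ U (Function.update K i A)
        = (∫ s in Set.Icc (0:ℝ) 1, G0 s)
          + ∫ s in Set.Icc (0:ℝ) 1, Set.indicator A F s := by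
    intro A hAm
    rw [potential]
    simp only [hsplit A]
    exact integral_add IG0 (IF.indicator hAm)
  rw [hut Ki measKi hKi.1, hut Ki' measKi' hKi'.1, hpot Ki measKi, hpot Ki' measKi']
  ring
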